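/- arXiv:1207.6612 — 5 statements merged into one kernel-verified Lean document; each statement's English description precedes it below -/
import Mathlib

section
/- For every function f : V → ℝ and every vertex x ∈ V, the curvature operator satisfies Γ₂(f,f)(x) = (1/4) · (1/d(x)) Σ_y (w(x,y)/d(y)) Σ_z w(y,z) (f(x) − 2 f(y) + f(z))² − (1/2) |∇f|²(x) + (1/2) (Δf(x))². -/
open Finset

/-- The weighted degree `d(x) = Σ_y w(x,y)`. -/
noncomputable def deg {V : Type*} [Fintype V] (w : V → V → ℝ) (x : V) : ℝ :=
  ∑ y, w x y

/-- The graph Laplacian `Δf(x) = (1/d(x)) Σ_y w(x,y) (f(y) − f(x))`. -/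
noncomputable def lap {V : Type*} [Fintype V] (w : V → V → ℝ) (f : V → ℝ) (x : V) : ℝ :=
  (1 / deg w x) * ∑ y, w x y * (f y - f x)

/-- The bilinear operator `Γ(f,g)(x) = (1/2)(Δ(fg)(x) − f(x)Δg(x) − g(x)Δf(x))`. -/
noncomputable def gam {V : Type*} [Fintype V] (w : V → V → ℝ) (f g : V → ℝ) (x : V) : ℝ :=
  (1 / 2) * (lap w (fun y => f y * g y) x - f x * lap w g x - g x * lap w f x)

/-- The curvature operator `Γ₂(f,g)(x) = (1/2)(ΔΓ(f,g)(x) − Γ(f,Δg)(x) − Γ(g,Δf)(x))`. -/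
noncomputable def gam2 {V : Type*} [Fintype V] (w : V → V → ℝ) (f g : V → ℝ) (x : V) : ℝ :=
  (1 / 2) * (lap w (gam w f g) x - gam w f (lap w g) x - gam w g (lap w f) x)

/-- The gradient square `|∇f|²(x) = (1/d(x)) Σ_y w(x,y) (f(x) − f(y))²`. -/
noncomputable def gradsq {V : Type*} [Fintype V] (w : V → V → ℝ) (f : V → ℝ) (x : V) : ℝ :=
  (1 / deg w x) * ∑ y, w x y * (f x - f y) ^ 2

/-- The curvature-dimension inequality `CD(m,κ)`. -/
def CD {V : Type*} [Fintype V] (w : V → V → ℝ) (m κ : ℝ) : Prop :=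
  ∀ (f : V → ℝ) (x : V), gam2 w f f x ≥ (1 / m) * (lap w f x) ^ 2 + κ * gam w f f x

lemma gam_eq {V : Type*} [Fintype V] (w : V → V → ℝ) (hdeg : ∀ x, 0 < deg w x)
    (f g : V → ℝ) (x : V) :
    gam w f g x = (1 / (2 * deg w x)) * ∑ y, w x y * ((f y - f x) * (g y - g x)) := by
  have hD : deg w x ≠ 0 := (hdeg x).ne'
  unfold gam lap
  have h1 : ∑ y, w x y * (f y * g y - f x * g x)
      = ∑ y, w x y * ((f y - f x) * (g y - g x))
        + f x * ∑ y, w x y * (g y - g x) + g x * ∑ y, w x y * (f y - f x) := by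
    rw [mul_sum, mul_sum, ← sum_add_distrib, ← sum_add_distrib]
    exact sum_congr rfl fun y _ => by ring
  rw [h1]
  field_simp
  ring

theorem gamma2_formula {V : Type*} [Fintype V] (w : V → V → ℝ)
    (hsymm : ∀ x y, w x y = w y x) (hnonneg : ∀ x y, 0 ≤ w x y)
    (hloop : ∀ x, w x x = 0) (hdeg : ∀ x, 0 < deg w x)
    (f : V → ℝ) (x : V) :
    gam2 w f f x =
      (1 / 4) * ((1 / deg w x) * ∑ y, (w x y / deg w y) *
        ∑ z, w y z * (f x - 2 * f y + f z) ^ 2) -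
      (1 / 2) * gradsq w f x + (1 / 2) * (lap w f x) ^ 2 := by
  have hD : deg w x ≠ 0 := (hdeg x).ne'
  set S1 : ℝ := ∑ y, w x y * gam w f f y with hS1
  set S2 : ℝ := ∑ y, w x y * ((f y - f x) * lap w f y) with hS2
  set S3 : ℝ := ∑ y, w x y * (f y - f x) ^ 2 with hS3
  set S4 : ℝ := ∑ y, w x y * (f y - f x) with hS4
  -- inner identity
  have hinner : ∀ y, (w x y / deg w y) * ∑ z, w y z * (f x - 2 * f y + f z) ^ 2
      = w x y * (2 * gam w f f y - 2 * ((f y - f x) * lap w f y) + (f y - f x) ^ 2) := by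
    intro y
    have hd : deg w y ≠ 0 := (hdeg y).ne'
    have hexp : ∑ z, w y z * (f x - 2 * f y + f z) ^ 2
        = ∑ z, w y z * ((f z - f y) * (f z - f y))
          - 2 * (f y - f x) * ∑ z, w y z * (f z - f y) + (f y - f x) ^ 2 * deg w y := by
      unfold deg
      rw [mul_sum, ← sum_sub_distrib, mul_sum, ← sum_add_distrib]
      exact sum_congr rfl fun z _ => by ring
    rw [hexp, gam_eq w hdeg f f y]
    unfold lap
    field_simp
  -- RHS first sum
  have hsum1 : ∑ y, (w x y / deg w y) * ∑ z, w y z * (f x - 2 * f y + f z) ^ 2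
      = 2 * S1 - 2 * S2 + S3 := by
    rw [hS1, hS2, hS3, mul_sum, mul_sum, ← sum_sub_distrib, ← sum_add_distrib]
    exact sum_congr rfl fun y _ => by rw [hinner y]; ring
  -- lap of gam
  have hlapgam : lap w (gam w f f) x = (1 / deg w x) * (S1 - gam w f f x * deg w x) := by
    unfold lap
    congr 1
    rw [hS1]
    unfold deg
    rw [mul_sum, ← sum_sub_distrib]
    exact sum_congr rfl fun y _ => by ring
  -- gam f (lap f)
  have hgamlap : gam w f (lap w f) x
      = (1 / (2 * deg w x)) * (S2 - lap w f x * S4) := by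
    rw [gam_eq w hdeg]
    congr 1
    rw [hS2, hS4, mul_sum, ← sum_sub_distrib]
    exact sum_congr rfl fun y _ => by ring
  have hgamx : gam w f f x = (1 / (2 * deg w x)) * S3 := by
    rw [gam_eq w hdeg]
    congr 1
    exact sum_congr rfl fun y _ => by ring
  have hlapx : lap w f x = (1 / deg w x) * S4 := rfl
  have hgrad : gradsq w f x = (1 / deg w x) * S3 := by
    unfold gradsq
    congr 1
    exact sum_congr rfl fun y _ => by ring
  unfold gam2
  rw [hsum1, hlapgam, hgamlap, hgamx, hlapx, hgrad]
  field_simp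
  ring
end

section
/- Suppose G satisfies the curvature-dimension inequality CD(m,κ). Then for every vertex x ∈ V and every function f : V → ℝ, (4/m − 2) (Δf(x))² + (2 + 2κ) |∇f|²(x) ≤ (1/d(x)) Σ_y (w(x,y)/d(y)) Σ_z w(y,z) (f(x) − 2 f(y) + f(z))². -/
open Finset

lemma gam_sum {V : Type*} [Fintype V] (w : V → V → ℝ) (f g : V → ℝ) (x : V) :
    gam w f g x = (1 / (2 * deg w x)) * ∑ y, w x y * ((f y - f x) * (g y - g x)) := by
  have hS : (∑ y, w x y * (f y * g y - f x * g x))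
      - f x * (∑ y, w x y * (g y - g x)) - g x * (∑ y, w x y * (f y - f x))
      = ∑ y, w x y * ((f y - f x) * (g y - g x)) := by
    rw [Finset.mul_sum, Finset.mul_sum, ← Finset.sum_sub_distrib, ← Finset.sum_sub_distrib]
    exact Finset.sum_congr rfl fun y _ => by ring
  unfold gam lap
  linear_combination (1 / (2 * deg w x)) * hS

lemma gam_self {V : Type*} [Fintype V] (w : V → V → ℝ) (f : V → ℝ) (x : V) :
    gam w f f x = (1 / 2) * gradsq w f x := by
  have h : (∑ y, w x y * ((f y - f x) * (f y - f x))) = ∑ y, w x y * (f x - f y) ^ 2 :=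
    Finset.sum_congr rfl fun y _ => by ring
  rw [gam_sum, h]; unfold gradsq; ring

lemma key_identity {V : Type*} [Fintype V] (w : V → V → ℝ) (hdeg : ∀ x, 0 < deg w x)
    (f : V → ℝ) (x : V) :
    (1 / deg w x) * ∑ y, (w x y / deg w y) *
        ∑ z, w y z * (f x - 2 * f y + f z) ^ 2
      = 4 * gam2 w f f x + 2 * gradsq w f x - 2 * (lap w f x) ^ 2 := by
  have hdx : deg w x ≠ 0 := (hdeg x).ne'
  set A := ∑ y, w x y * gradsq w f y with hA
  set B := ∑ y, w x y * ((f y - f x) * lap w f y) with hB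
  set C := ∑ y, w x y * (f y - f x) ^ 2 with hC
  set T := ∑ y, w x y * (f y - f x) with hT
  -- inner identity
  have hinner : ∀ y, (w x y / deg w y) * ∑ z, w y z * (f x - 2 * f y + f z) ^ 2
      = w x y * gradsq w f y - 2 * (w x y * ((f y - f x) * lap w f y))
        + w x y * (f y - f x) ^ 2 := by
    intro y
    have hdy : deg w y ≠ 0 := (hdeg y).ne'
    have hz : ∑ z, w y z * (f x - 2 * f y + f z) ^ 2
        = (∑ z, w y z * (f y - f z) ^ 2) + 2 * (f x - f y) * (∑ z, w y z * (f z - f y))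
          + (f x - f y) ^ 2 * (∑ z, w y z) := by
      rw [Finset.mul_sum, Finset.mul_sum, ← Finset.sum_add_distrib, ← Finset.sum_add_distrib]
      exact Finset.sum_congr rfl fun z _ => by ring
    have hD : (∑ z, w y z) = deg w y := rfl
    rw [hz, hD]
    unfold gradsq lap
    field_simp
    ring
  have h1 : (∑ y, (w x y / deg w y) * ∑ z, w y z * (f x - 2 * f y + f z) ^ 2)
      = A - 2 * B + C := by
    rw [hA, hB, hC, Finset.mul_sum, ← Finset.sum_sub_distrib, ← Finset.sum_add_distrib]
    exact Finset.sum_congr rfl fun y _ => hinner y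
  rw [h1]
  -- express the RHS pieces
  have hlapx : lap w f x = (1 / deg w x) * T := rfl
  have hgx : gradsq w f x = (1 / deg w x) * C := by
    unfold gradsq
    rw [hC]
    congr 1
    exact Finset.sum_congr rfl fun y _ => by ring
  have hlg : lap w (gam w f f) x
      = (1 / deg w x) * ((1/2) * A - (1/2) * gradsq w f x * deg w x) := by
    unfold lap
    congr 1
    have : (∑ y, w x y * (gam w f f y - gam w f f x))
        = ∑ y, ((1/2) * (w x y * gradsq w f y) - (1/2) * gradsq w f x * w x y) := by
      refine Finset.sum_congr rfl fun y _ => ?_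
      rw [gam_self, gam_self]; ring
    rw [this, Finset.sum_sub_distrib, ← Finset.mul_sum, ← Finset.mul_sum, ← hA]
    have hD : (∑ y, w x y) = deg w x := rfl
    rw [hD]
  have hgl : gam w f (lap w f) x = (1 / (2 * deg w x)) * (B - lap w f x * T) := by
    rw [gam_sum]
    congr 1
    have : (∑ y, w x y * ((f y - f x) * (lap w f y - lap w f x)))
        = ∑ y, (w x y * ((f y - f x) * lap w f y) - lap w f x * (w x y * (f y - f x))) := by
      exact Finset.sum_congr rfl fun y _ => by ring
    rw [this, Finset.sum_sub_distrib, ← Finset.mul_sum]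
  unfold gam2
  rw [hlg, hgl, hgx, hlapx]
  field_simp
  ring

theorem lemma_CD_inequality {V : Type*} [Fintype V] (w : V → V → ℝ)
    (hsymm : ∀ x y, w x y = w y x) (hnonneg : ∀ x y, 0 ≤ w x y)
    (hloop : ∀ x, w x x = 0) (hdeg : ∀ x, 0 < deg w x)
    (m κ : ℝ) (hm : 0 < m) (hCD : CD w m κ)
    (f : V → ℝ) (x : V) :
    (4 / m - 2) * (lap w f x) ^ 2 + (2 + 2 * κ) * gradsq w f x ≤
      (1 / deg w x) * ∑ y, (w x y / deg w y) *
        ∑ z, w y z * (f x - 2 * f y + f z) ^ 2 := by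
  rw [key_identity w hdeg f x]
  have hcd := hCD f x
  rw [gam_self] at hcd
  have h4 : (4 / m - 2) * (lap w f x) ^ 2 + (2 + 2 * κ) * gradsq w f x
      = 4 * ((1 / m) * (lap w f x) ^ 2 + κ * ((1 / 2) * gradsq w f x))
        + 2 * gradsq w f x - 2 * (lap w f x) ^ 2 := by ring
  rw [h4]
  linarith
end

section
/- Suppose G is connected and satisfies the curvature-dimension inequality CD(m,κ), and suppose λ is a nontrivial (nonzero) eigenvalue of the Laplacian, i.e., there exists a nonconstant function f : V → ℝ with −Δf(x) = λ f(x) for all x ∈ V. Then κ ≤ λ. -/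
open Finset

lemma lap_smul {V : Type*} [Fintype V] (w : V → V → ℝ) (c : ℝ) (g : V → ℝ) (x : V) :
    lap w (fun y => c * g y) x = c * lap w g x := by
  simp only [lap]
  have h : ∑ y, w x y * (c * g y - c * g x) = c * ∑ y, w x y * (g y - g x) := by
    rw [Finset.mul_sum]; exact Finset.sum_congr rfl fun y _ => by ring
  rw [h]; ring

lemma exists_adj_ne {V : Type*} (G : SimpleGraph V) (f : V → ℝ) :
    ∀ {x y : V}, G.Walk x y → f x ≠ f y → ∃ a b, G.Adj a b ∧ f a ≠ f b := by
  intro x y p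
  induction p with
  | nil => intro h; exact absurd rfl h
  | @cons a b c h' p ih =>
    intro h
    by_cases hab : f a = f b
    · exact ih (fun hbc => h (hab.trans hbc))
    · exact ⟨a, b, h', hab⟩

theorem ricci_le_eigenvalue {V : Type*} [Fintype V] (w : V → V → ℝ)
    (hsymm : ∀ x y, w x y = w y x) (hnonneg : ∀ x y, 0 ≤ w x y)
    (hloop : ∀ x, w x x = 0) (hdeg : ∀ x, 0 < deg w x)
    (hconn : (SimpleGraph.fromRel fun x y => 0 < w x y).Connected)
    (m κ : ℝ) (hm : 0 < m) (hCD : CD w m κ)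
    (lam : ℝ) (hlam : lam ≠ 0) (f : V → ℝ)
    (hf : ∀ x, -lap w f x = lam * f x) (hnc : ∃ x y, f x ≠ f y) :
    κ ≤ lam := by
  have hlapf : lap w f = fun y => -lam * f y := by
    funext y; have := hf y; linarith
  set G : V → ℝ := gam w f f with hG
  -- there is a point with G positive
  obtain ⟨u, v, huv⟩ := hnc
  obtain ⟨a, b, hab, hfab⟩ :=
    exists_adj_ne _ f ((hconn.preconnected u v).some) huv
  rw [SimpleGraph.fromRel_adj] at hab
  have hwab : 0 < w a b := by
    rcases hab.2 with h | h
    · exact h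
    · rw [hsymm]; exact h
  have hGa : 0 < G a := by
    rw [hG, gam_self]
    have hsum : 0 < ∑ y, w a y * (f a - f y) ^ 2 := by
      apply Finset.sum_pos'
      · exact fun y _ => mul_nonneg (hnonneg a y) (sq_nonneg _)
      · refine ⟨b, Finset.mem_univ b, mul_pos hwab ?_⟩
        have hne : f a - f b ≠ 0 := sub_ne_zero.mpr hfab
        positivity
    have hd := hdeg a
    unfold gradsq
    positivity
  -- maximum point of G
  obtain ⟨x₀, -, hx₀⟩ := Finset.exists_max_image (Finset.univ : Finset V) G
    ⟨a, Finset.mem_univ a⟩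
  have hGx₀ : 0 < G x₀ := lt_of_lt_of_le hGa (hx₀ a (Finset.mem_univ a))
  -- lap G x₀ ≤ 0
  have hlapG : lap w G x₀ ≤ 0 := by
    unfold lap
    have hsum : ∑ y, w x₀ y * (G y - G x₀) ≤ 0 := by
      apply Finset.sum_nonpos
      intro y _
      exact mul_nonpos_of_nonneg_of_nonpos (hnonneg x₀ y)
        (sub_nonpos.mpr (hx₀ y (Finset.mem_univ y)))
    have hd := hdeg x₀
    exact mul_nonpos_of_nonneg_of_nonpos (by positivity) hsum
  -- gam w f (lap w f) x₀ = -lam * G x₀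
  have hgamlap : gam w f (lap w f) x₀ = -lam * G x₀ := by
    rw [hlapf, hG]
    simp only [gam]
    have h1 : lap w (fun y => f y * (-lam * f y)) x₀
        = -lam * lap w (fun y => f y * f y) x₀ := by
      have he : (fun y => f y * (-lam * f y)) = (fun y => -lam * (f y * f y)) := by
        funext y; ring
      rw [he, lap_smul]
    rw [h1, lap_smul]
    ring
  -- gam2 identity at x₀
  have hgam2 : gam2 w f f x₀ = (1 / 2) * lap w G x₀ + lam * G x₀ := by
    simp only [gam2, ← hG]
    rw [hgamlap]; ring
  have hcd := hCD f x₀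
  rw [hgam2] at hcd
  have hsq : 0 ≤ (1 / m) * (lap w f x₀) ^ 2 := by positivity
  have : κ * G x₀ ≤ lam * G x₀ := by nlinarith
  exact le_of_mul_le_mul_right (by linarith [mul_comm κ (G x₀), mul_comm lam (G x₀)]) hGx₀
end

section
/- Suppose G satisfies the curvature-dimension inequality CD(m,κ) and f : V → ℝ satisfies −Δf(x) = λ f(x) for all x ∈ V. Then for every vertex x ∈ V, −Δ(|∇f|²)(x) ≤ (2λ − 2κ) |∇f|²(x) − (4/m) λ² f²(x), where |∇f|² is viewed as a function on V. -/
open Finset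

lemma gam_smul {V : Type*} [Fintype V] (w : V → V → ℝ) (c : ℝ) (f g : V → ℝ) (x : V) :
    gam w f (fun y => c * g y) x = c * gam w f g x := by
  unfold gam
  have h1 : lap w (fun y => f y * (c * g y)) x = c * lap w (fun y => f y * g y) x := by
    rw [show (fun y => f y * (c * g y)) = (fun y => c * (f y * g y)) from funext fun y => by ring]
    exact lap_smul w c _ x
  rw [h1, lap_smul w c g x]
  ring

theorem lap_gradsq_bound {V : Type*} [Fintype V] (w : V → V → ℝ)
    (hsymm : ∀ x y, w x y = w y x) (hnonneg : ∀ x y, 0 ≤ w x y)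
    (hloop : ∀ x, w x x = 0) (hdeg : ∀ x, 0 < deg w x)
    (m κ : ℝ) (hm : 0 < m) (hCD : CD w m κ)
    (lam : ℝ) (f : V → ℝ) (hf : ∀ x, -lap w f x = lam * f x) (x : V) :
    -lap w (fun y => gradsq w f y) x ≤
      (2 * lam - 2 * κ) * gradsq w f x - (4 / m) * lam ^ 2 * f x ^ 2 := by

  have hlapf : lap w f = fun y => (-lam) * f y := by
    funext y
    have := hf y
    linarith
  have hgrad : (fun y => gradsq w f y) = (fun y => 2 * gam w f f y) := by
    funext y
    rw [gam_self]
    ring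
  have hlapgrad : lap w (fun y => gradsq w f y) x = 2 * lap w (gam w f f) x := by
    rw [hgrad, lap_smul]
  have hgam2 : gam2 w f f x
      = (1 / 2) * (lap w (gam w f f) x + 2 * lam * gam w f f x) := by
    unfold gam2
    rw [hlapf, gam_smul]
    ring
  have hcd := hCD f x
  have hlfx : lap w f x = -(lam * f x) := by
    have := hf x; linarith
  have hsq : (lap w f x) ^ 2 = lam ^ 2 * f x ^ 2 := by rw [hlfx]; ring
  rw [hgam2, hsq] at hcd
  have hge : gam w f f x = (1 / 2) * gradsq w f x := gam_self w f x
  rw [hlapgrad]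
  rw [hge] at hcd
  have hm' : (1 / m) * (lam ^ 2 * f x ^ 2) = (1 / m) * lam ^ 2 * f x ^ 2 := by ring
  have h4 : 4 / m * lam ^ 2 * f x ^ 2 = 4 * (1 / m * (lam ^ 2 * f x ^ 2)) := by ring
  linarith
end

section
/- Suppose G is a finite connected simple (unweighted) graph with maximum degree d and diameter D, G satisfies the curvature-dimension inequality CD(m,0), and λ is a nonzero eigenvalue of the operator −Δ (i.e., there is a nonconstant function f : V → ℝ with −Δf(x) = λ f(x) for all x ∈ V). Then λ ≥ 1 / ((4 − 1/m)·d·D²). -/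
open Finset

set_option maxHeartbeats 1000000

namespace EigenAux

variable {V : Type*} [Fintype V]

lemma deg_nonneg {w : V → V → ℝ} (hw : ∀ x y, 0 ≤ w x y) (x : V) : 0 ≤ deg w x :=
  Finset.sum_nonneg fun y _ => hw x y

lemma deg_mul_lap (w : V → V → ℝ) (f : V → ℝ) (x : V) (hd : deg w x ≠ 0) :
    deg w x * lap w f x = ∑ y, w x y * (f y - f x) := by
  unfold lap; field_simp

lemma lap_lin (w : V → V → ℝ) (a b : V → ℝ) (c : ℝ) (x : V) :
    lap w (fun y => a y + c * b y) x = lap w a x + c * lap w b x := by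
  unfold lap
  have h : ∀ y : V, w x y * ((a y + c * b y) - (a x + c * b x))
      = w x y * (a y - a x) + c * (w x y * (b y - b x)) := fun y => by ring
  rw [Finset.sum_congr rfl fun y _ => h y, Finset.sum_add_distrib, ← Finset.mul_sum]
  ring

lemma lap_smul (w : V → V → ℝ) (b : V → ℝ) (c : ℝ) (x : V) :
    lap w (fun y => c * b y) x = c * lap w b x := by
  unfold lap
  have h : ∀ y : V, w x y * ((c * b y) - (c * b x)) = c * (w x y * (b y - b x)) :=
    fun y => by ring
  rw [Finset.sum_congr rfl fun y _ => h y, ← Finset.mul_sum]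
  ring

lemma gam_right_smul (w : V → V → ℝ) (f : V → ℝ) (c : ℝ) (x : V) :
    gam w f (fun y => c * f y) x = c * gam w f f x := by
  unfold gam
  have h1 : (fun y => f y * (c * f y)) = (fun y => c * (f y * f y)) := funext fun y => by ring
  rw [h1, lap_smul, lap_smul]
  ring

lemma lap_H (w : V → V → ℝ) (f : V → ℝ) (lam : ℝ)
    (hlapf : lap w f = fun y => (-lam) * f y) (x : V) :
    lap w (fun y => gam w f f y + (2 * lam) * (f y * f y)) x
      = 2 * gam2 w f f x + 2 * lam * gam w f f x - 4 * lam ^ 2 * (f x * f x) := by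
  rw [lap_lin w (gam w f f) (fun y => f y * f y) (2 * lam) x]
  have h3 : lap w (gam w f f) x = 2 * gam2 w f f x + 2 * gam w f (lap w f) x := by
    simp only [gam2]; ring
  have h4 : gam w f (lap w f) x = -lam * gam w f f x := by
    rw [hlapf, gam_right_smul]
  have h5 : lap w (fun y => f y * f y) x = 2 * gam w f f x + 2 * f x * lap w f x := by
    simp only [gam]; ring
  have h6 : lap w f x = -lam * f x := by rw [hlapf]
  rw [h3, h4, h5, h6]; ring

lemma lap_nonpos_at_max {w : V → V → ℝ} (hw : ∀ x y, 0 ≤ w x y) (H : V → ℝ) (x : V)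
    (hmax : ∀ y, H y ≤ H x) : lap w H x ≤ 0 := by
  unfold lap
  have h1 : (0:ℝ) ≤ 1 / deg w x := by
    have := deg_nonneg hw x
    positivity
  have h2 : ∑ y, w x y * (H y - H x) ≤ 0 :=
    Finset.sum_nonpos fun y _ =>
      mul_nonpos_iff.mpr (Or.inl ⟨hw x y, by linarith [hmax y]⟩)
  nlinarith [mul_nonneg h1 (neg_nonneg.mpr h2)]

lemma deg_two_gam (w : V → V → ℝ) (f : V → ℝ) (x : V) (hd : deg w x ≠ 0) :
    deg w x * (2 * gam w f f x) = ∑ y, w x y * (f x - f y) ^ 2 := by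
  have h1 := deg_mul_lap w (fun y => f y * f y) x hd
  have h2 := deg_mul_lap w f x hd
  have e : deg w x * (2 * gam w f f x)
      = deg w x * lap w (fun y => f y * f y) x - 2 * f x * (deg w x * lap w f x) := by
    simp only [gam]; ring
  rw [e, h1, h2, Finset.mul_sum, ← Finset.sum_sub_distrib]
  exact Finset.sum_congr rfl fun y _ => by ring

lemma gam_nonneg {w : V → V → ℝ} (hw : ∀ x y, 0 ≤ w x y) (f : V → ℝ) (x : V)
    (hd : 0 < deg w x) : 0 ≤ gam w f f x := by
  have h := deg_two_gam w f x (ne_of_gt hd)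
  have h2 : (0:ℝ) ≤ ∑ y, w x y * (f x - f y) ^ 2 :=
    Finset.sum_nonneg fun y _ => mul_nonneg (hw x y) (sq_nonneg _)
  nlinarith

/-- Bound on `Σ_y w x y (f x − f y)²` at a maximum point of an eigenfunction. -/
lemma Q_max_bound {w : V → V → ℝ} (hw : ∀ x y, 0 ≤ w x y) (f : V → ℝ) (lam M : ℝ) (x : V)
    (hd : deg w x ≠ 0) (hmax : ∀ y, f y ≤ f x) (habs : ∀ y, -M ≤ f y) (hxM : f x ≤ M)
    (hlam : 0 ≤ lam) (heig : lap w f x = -(lam * f x)) :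
    ∑ y, w x y * (f x - f y) ^ 2 ≤ 2 * lam * M ^ 2 * deg w x := by
  have hM0 : (0:ℝ) ≤ M := by linarith [habs x, hxM]
  have h1 : ∑ y, w x y * (f x - f y) ^ 2 ≤ ∑ y, w x y * ((2 * M) * (f x - f y)) := by
    apply Finset.sum_le_sum; intro y _
    have h2 : 0 ≤ f x - f y := by linarith [hmax y]
    have h3 : f x - f y ≤ 2 * M := by linarith [habs y]
    have h4 := hw x y
    have h5 : (f x - f y) ^ 2 ≤ (2 * M) * (f x - f y) := by nlinarith
    exact mul_le_mul_of_nonneg_left h5 h4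
  have h4 : ∑ y, w x y * ((2 * M) * (f x - f y)) = (2 * M) * ∑ y, w x y * (f x - f y) := by
    rw [Finset.mul_sum]; exact Finset.sum_congr rfl fun y _ => by ring
  have h5 : ∑ y, w x y * (f x - f y) = -(deg w x * lap w f x) := by
    rw [deg_mul_lap w f x hd, ← Finset.sum_neg_distrib]
    exact Finset.sum_congr rfl fun y _ => by ring
  have h6 : ∑ y, w x y * (f x - f y) = lam * f x * deg w x := by
    rw [h5, heig]; ring
  have hdeg : 0 ≤ deg w x := deg_nonneg hw x
  have h7 : lam * f x * deg w x ≤ lam * M * deg w x := by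
    apply mul_le_mul_of_nonneg_right _ hdeg
    exact mul_le_mul_of_nonneg_left hxM hlam
  calc ∑ y, w x y * (f x - f y) ^ 2 ≤ (2 * M) * (lam * f x * deg w x) := by
        rw [← h6]; rw [h4] at h1; exact h1
    _ ≤ (2 * M) * (lam * M * deg w x) := by
        apply mul_le_mul_of_nonneg_left h7 (by linarith)
    _ = 2 * lam * M ^ 2 * deg w x := by ring

/-- The Harnack-type estimate: `Γ(f,f) ≤ (4 − 1/m) λ M²`. -/
lemma harnack {w : V → V → ℝ} (hw : ∀ x y, 0 ≤ w x y) (f : V → ℝ) (lam m M : ℝ)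
    (hcd : ∀ x, gam2 w f f x ≥ (1 / m) * (lap w f x) ^ 2)
    (hlam : 0 < lam) (hm : 1 / m ≤ 1)
    (heig : lap w f = fun y => (-lam) * f y) (hM : ∀ y, f y ^ 2 ≤ M ^ 2) :
    ∀ x, gam w f f x ≤ (4 - 1 / m) * lam * M ^ 2 := by
  intro x
  obtain ⟨z, -, hz⟩ := Finset.exists_max_image Finset.univ
    (fun y => gam w f f y + (2 * lam) * (f y * f y)) ⟨x, Finset.mem_univ x⟩
  have hz' : ∀ y, gam w f f y + (2 * lam) * (f y * f y)
      ≤ gam w f f z + (2 * lam) * (f z * f z) := fun y => hz y (Finset.mem_univ y)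
  have h0 : lap w (fun y => gam w f f y + (2 * lam) * (f y * f y)) z ≤ 0 :=
    lap_nonpos_at_max hw _ z hz'
  have hid := lap_H w f lam heig z
  have hcd' : (1 / m) * (lam ^ 2 * (f z * f z)) ≤ gam2 w f f z := by
    have := hcd z
    have h8 : (lap w f z) ^ 2 = lam ^ 2 * (f z * f z) := by
      rw [heig]; ring
    rw [h8] at this
    linarith
  have h6 : 2 * gam2 w f f z + 2 * lam * gam w f f z - 4 * lam ^ 2 * (f z * f z) ≤ 0 := by
    rw [← hid]; exact h0
  have key : gam w f f z ≤ (2 - 1 / m) * lam * (f z * f z) := by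
    have h7 : 2 * lam * gam w f f z ≤ 2 * lam * ((2 - 1 / m) * lam * (f z * f z)) := by
      nlinarith
    exact le_of_mul_le_mul_left h7 (by linarith)
  have hfz : f z * f z ≤ M ^ 2 := by
    have := hM z; nlinarith [sq_nonneg (f z)]
  have h9 : gam w f f x ≤ gam w f f x + (2 * lam) * (f x * f x) := by
    nlinarith [mul_self_nonneg (f x)]
  calc gam w f f x ≤ gam w f f z + (2 * lam) * (f z * f z) := le_trans h9 (hz' x)
    _ ≤ (2 - 1 / m) * lam * (f z * f z) + (2 * lam) * (f z * f z) := by linarith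
    _ = (4 - 1 / m) * lam * (f z * f z) := by ring
    _ ≤ (4 - 1 / m) * lam * M ^ 2 := by
        have hc : (0:ℝ) ≤ (4 - 1 / m) * lam := by nlinarith
        exact mul_le_mul_of_nonneg_left hfz hc

lemma walk_getVert_inj {G : SimpleGraph V} :
    ∀ {u v : V} (p : G.Walk u v), p.IsPath →
      ∀ i ≤ p.length, ∀ j ≤ p.length, p.getVert i = p.getVert j → i = j := by
  intro u v p
  induction p with
  | nil => intro _ i hi j hj _; simp at hi hj; omega
  | @cons a b c h q ih =>
    intro hp i hi j hj heq
    rw [SimpleGraph.Walk.cons_isPath_iff] at hp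
    simp only [SimpleGraph.Walk.length_cons] at hi hj
    match i, j with
    | 0, 0 => rfl
    | 0, (j+1) =>
      exfalso
      apply hp.2
      rw [SimpleGraph.Walk.mem_support_iff_exists_getVert]
      refine ⟨j, ?_, by omega⟩
      have : (SimpleGraph.Walk.cons h q).getVert (j+1) = q.getVert j :=
        SimpleGraph.Walk.getVert_cons_succ q h
      rw [← this, ← heq, SimpleGraph.Walk.getVert_zero]
    | (i+1), 0 =>
      exfalso
      apply hp.2
      rw [SimpleGraph.Walk.mem_support_iff_exists_getVert]
      refine ⟨i, ?_, by omega⟩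
      have : (SimpleGraph.Walk.cons h q).getVert (i+1) = q.getVert i :=
        SimpleGraph.Walk.getVert_cons_succ q h
      rw [← this, heq, SimpleGraph.Walk.getVert_zero]
    | (i+1), (j+1) =>
      have e1 : (SimpleGraph.Walk.cons h q).getVert (i+1) = q.getVert i :=
        SimpleGraph.Walk.getVert_cons_succ q h
      have e2 : (SimpleGraph.Walk.cons h q).getVert (j+1) = q.getVert j :=
        SimpleGraph.Walk.getVert_cons_succ q h
      have := ih hp.1 i (by omega) j (by omega) (by rwa [e1, e2] at heq)
      omega

end EigenAux

theorem eigenvalue_lower_bound_nonneg_curvature {V : Type*} [Fintype V]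
    (G : SimpleGraph V) [DecidableRel G.Adj] (hconn : G.Connected)
    (m : ℝ) (hm : 0 < m)
    (hCD : CD (fun x y => if G.Adj x y then (1 : ℝ) else 0) m 0)
    (lam : ℝ) (hlam : lam ≠ 0) (f : V → ℝ)
    (hf : ∀ x, -lap (fun x y => if G.Adj x y then (1 : ℝ) else 0) f x = lam * f x)
    (hnc : ∃ x y, f x ≠ f y) :
    lam ≥ 1 / ((4 - 1 / m) * (G.maxDegree : ℝ) * (G.diam : ℝ) ^ 2) := by
  classical
  set w : V → V → ℝ := fun x y => if G.Adj x y then (1 : ℝ) else 0 with hw_def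
  have hw_nonneg : ∀ x y, 0 ≤ w x y := by
    intro x y; simp only [hw_def]; split <;> norm_num
  have hw_symm : ∀ x y, w x y = w y x := by
    intro x y; simp only [hw_def, G.adj_comm]
  obtain ⟨a₀, b₀, hab⟩ := hnc
  have hab' : a₀ ≠ b₀ := fun h => hab (by rw [h])
  have hVnontriv : Nontrivial V := ⟨a₀, b₀, hab'⟩
  -- every vertex has a neighbor
  have hadj : ∀ x : V, ∃ y, G.Adj x y := by
    intro x
    obtain ⟨z, hz⟩ := exists_ne x
    obtain ⟨p⟩ := hconn x z
    have hplen : p.length ≠ 0 := by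
      intro h0
      exact hz (SimpleGraph.Walk.eq_of_length_eq_zero h0).symm
    have h := p.adj_getVert_succ (Nat.pos_of_ne_zero hplen)
    rw [SimpleGraph.Walk.getVert_zero] at h
    exact ⟨_, h⟩
  have hdeg_eq : ∀ x, deg w x = (G.degree x : ℝ) := by
    intro x
    simp only [deg, hw_def]
    rw [Finset.sum_boole]
    congr 1
    rw [SimpleGraph.degree, SimpleGraph.neighborFinset_eq_filter]
  have hdeg_pos : ∀ x, (0:ℝ) < deg w x := by
    intro x
    rw [hdeg_eq]
    exact_mod_cast (G.degree_pos_iff_exists_adj x).mpr (hadj x)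
  -- extrema of f
  obtain ⟨xM, -, hxM⟩ := Finset.exists_max_image (Finset.univ : Finset V) f
    ⟨a₀, Finset.mem_univ _⟩
  obtain ⟨xm, -, hxm⟩ := Finset.exists_min_image (Finset.univ : Finset V) f
    ⟨a₀, Finset.mem_univ _⟩
  have hmax : ∀ y, f y ≤ f xM := fun y => hxM y (Finset.mem_univ y)
  have hmin : ∀ y, f xm ≤ f y := fun y => hxm y (Finset.mem_univ y)
  have hlt : f xm < f xM := by
    rcases lt_or_ge (f xm) (f xM) with h | h
    · exact h
    · exfalso
      apply hab
      have hall : ∀ y, f y = f xM := fun y => le_antisymm (hmax y) (h.trans (hmin y))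
      rw [hall a₀, hall b₀]
  have hlapf : ∀ x, lap w f x = -(lam * f x) := fun x => by
    have := hf x; linarith
  have hlapfun : lap w f = fun y => (-lam) * f y := funext fun y => by rw [hlapf y]; ring
  -- sign of lam
  have hsum_max : ∑ y, w xM y * (f y - f xM) ≤ 0 :=
    Finset.sum_nonpos fun y _ =>
      mul_nonpos_iff.mpr (Or.inl ⟨hw_nonneg xM y, by linarith [hmax y]⟩)
  have hsum_min : (0:ℝ) ≤ ∑ y, w xm y * (f y - f xm) :=
    Finset.sum_nonneg fun y _ =>
      mul_nonneg (hw_nonneg xm y) (by linarith [hmin y])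
  have hlapmax : lap w f xM ≤ 0 := by
    have h1 := EigenAux.deg_mul_lap w f xM (ne_of_gt (hdeg_pos xM))
    nlinarith [hdeg_pos xM]
  have hlapmin : 0 ≤ lap w f xm := by
    have h1 := EigenAux.deg_mul_lap w f xm (ne_of_gt (hdeg_pos xm))
    nlinarith [hdeg_pos xm]
  have hlamfM : 0 ≤ lam * f xM := by have := hlapf xM; linarith
  have hlamfm : lam * f xm ≤ 0 := by have := hlapf xm; linarith
  have hlampos : 0 < lam := by
    rcases hlam.lt_or_gt with h | h
    · exfalso
      have h1 : f xM ≤ 0 := by nlinarith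
      have h2 : 0 ≤ f xm := by nlinarith
      linarith
    · exact h
  have hfxM0 : 0 ≤ f xM := by nlinarith
  have hfxm0 : f xm ≤ 0 := by nlinarith
  clear hsum_max hsum_min hlapmax hlapmin hlamfM hlamfm
  -- the sup norm M
  set M : ℝ := max (f xM) (-f xm) with hM_def
  have hMfxM : f xM ≤ M := le_max_left _ _
  have hMfxm : -f xm ≤ M := le_max_right _ _
  have hM_pos : 0 < M := by
    rcases eq_or_lt_of_le hfxM0 with h | h
    · have h2 : 0 < -f xm := by rw [← h] at hlt; linarith
      linarith
    · linarith
  have habs_lo : ∀ y, -M ≤ f y := fun y => by linarith [hmin y]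
  have habs_hi : ∀ y, f y ≤ M := fun y => le_trans (hmax y) hMfxM
  have hsq : ∀ y, f y ^ 2 ≤ M ^ 2 := fun y => by nlinarith [habs_lo y, habs_hi y]
  -- CD specialized
  have hcd_all : ∀ x, gam2 w f f x ≥ (1 / m) * (lap w f x) ^ 2 := by
    intro x
    have := hCD f x
    simpa using this
  -- summation identities ⇒ 1/m ≤ 1
  set S : ℝ := ∑ x, deg w x * (f x * f x) with hS_def
  have hS_pos : 0 < S := by
    have hterm : ∀ x ∈ (Finset.univ : Finset V), 0 ≤ deg w x * (f x * f x) :=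
      fun x _ => mul_nonneg (hdeg_pos x).le (mul_self_nonneg _)
    have hex : ∃ x₀, f x₀ ≠ 0 := by
      by_contra hc
      push_neg at hc
      rw [hc xM, hc xm] at hlt
      exact lt_irrefl _ hlt
    obtain ⟨x₀, hx₀⟩ := hex
    exact Finset.sum_pos' hterm ⟨x₀, Finset.mem_univ _,
      mul_pos (hdeg_pos x₀) (mul_self_pos.mpr hx₀)⟩
  have hsum_lap : ∀ h : V → ℝ, ∑ x, deg w x * lap w h x = 0 := by
    intro h
    rw [Finset.sum_congr rfl fun x _ =>
      EigenAux.deg_mul_lap w h x (ne_of_gt (hdeg_pos x))]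
    have e2 : ∑ x, ∑ y, w x y * (h y - h x)
        = (∑ x, ∑ y, w x y * h y) - ∑ x, ∑ y, w x y * h x := by
      rw [← Finset.sum_sub_distrib]
      refine Finset.sum_congr rfl fun x _ => ?_
      rw [← Finset.sum_sub_distrib]
      exact Finset.sum_congr rfl fun y _ => by ring
    have e3 : ∑ x, ∑ y, w x y * h y = ∑ x, deg w x * h x := by
      rw [Finset.sum_comm]
      refine Finset.sum_congr rfl fun y _ => ?_
      calc ∑ x, w x y * h y = (∑ x, w x y) * h y := by rw [Finset.sum_mul]
        _ = (∑ x, w y x) * h y := by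
            rw [Finset.sum_congr rfl fun x _ => hw_symm x y]
        _ = deg w y * h y := rfl
    have e4 : ∑ x, ∑ y, w x y * h x = ∑ x, deg w x * h x := by
      refine Finset.sum_congr rfl fun x _ => ?_
      calc ∑ y, w x y * h x = (∑ y, w x y) * h x := by rw [Finset.sum_mul]
        _ = deg w x * h x := rfl
    rw [e2, e3, e4, sub_self]
  have hsum_gam : ∑ x, deg w x * gam w f f x = lam * S := by
    have e : ∀ x, deg w x * gam w f f x
        = (1/2) * (deg w x * lap w (fun y => f y * f y) x)
          - f x * (deg w x * lap w f x) := by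
      intro x; simp only [gam]; ring
    rw [Finset.sum_congr rfl fun x _ => e x, Finset.sum_sub_distrib]
    have e1 : ∑ x, (1/2) * (deg w x * lap w (fun y => f y * f y) x) = 0 := by
      rw [← Finset.mul_sum, hsum_lap]; ring
    have e2 : ∑ x, f x * (deg w x * lap w f x)
        = ∑ x, -(lam * (deg w x * (f x * f x))) := by
      refine Finset.sum_congr rfl fun x _ => ?_
      rw [hlapf x]; ring
    rw [e1, e2, Finset.sum_neg_distrib, ← Finset.mul_sum]
    ring
  have hsum_gam2 : ∑ x, deg w x * gam2 w f f x = lam * (lam * S) := by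
    have e : ∀ x, deg w x * gam2 w f f x
        = (1/2) * (deg w x * lap w (gam w f f) x)
          - deg w x * gam w f (lap w f) x := by
      intro x; simp only [gam2]; ring
    have e4 : ∀ x, gam w f (lap w f) x = -lam * gam w f f x := by
      intro x; rw [hlapfun, EigenAux.gam_right_smul]
    rw [Finset.sum_congr rfl fun x _ => e x, Finset.sum_sub_distrib]
    have e1 : ∑ x, (1/2) * (deg w x * lap w (gam w f f) x) = 0 := by
      rw [← Finset.mul_sum, hsum_lap]; ring
    have e2 : ∑ x, deg w x * gam w f (lap w f) x = -lam * (lam * S) := by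
      have e5 : ∀ x, deg w x * gam w f (lap w f) x
          = -lam * (deg w x * gam w f f x) := by
        intro x; rw [e4 x]; ring
      rw [Finset.sum_congr rfl fun x _ => e5 x, ← Finset.mul_sum, hsum_gam]
    rw [e1, e2]; ring
  have hm1 : 1 / m ≤ 1 := by
    by_contra hcon
    push_neg at hcon
    have hsumcd : ∑ x, deg w x * ((1/m) * (lap w f x)^2)
        ≤ ∑ x, deg w x * gam2 w f f x :=
      Finset.sum_le_sum fun x _ =>
        mul_le_mul_of_nonneg_left (hcd_all x) (hdeg_pos x).le
    have e5 : ∀ x, deg w x * ((1/m) * (lap w f x)^2)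
        = ((1/m) * (lam * lam)) * (deg w x * (f x * f x)) := by
      intro x; rw [hlapf x]; ring
    rw [Finset.sum_congr rfl fun x _ => e5 x, ← Finset.mul_sum, hsum_gam2] at hsumcd
    nlinarith [mul_pos (sub_pos.mpr hcon) (mul_pos (mul_pos hlampos hlampos) hS_pos)]
  clear hsum_lap hsum_gam hsum_gam2 hS_pos hS_def
  -- Harnack estimate
  have hHar : ∀ x, gam w f f x ≤ (4 - 1/m) * lam * M^2 :=
    EigenAux.harnack hw_nonneg f lam m M hcd_all hlampos hm1 hlapfun hsq
  clear hcd_all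
  -- degree bound
  set d : ℝ := (G.maxDegree : ℝ) with hd_def
  have hdegle : ∀ x, deg w x ≤ d := by
    intro x; rw [hdeg_eq, hd_def]
    exact_mod_cast G.degree_le_maxDegree x
  have hd_pos : 0 < d := lt_of_lt_of_le (hdeg_pos a₀) (hdegle a₀)
  have hB : (0:ℝ) ≤ (4 - 1/m) * lam * M^2 :=
    mul_nonneg (mul_nonneg (by linarith) hlampos.le) (sq_nonneg M)
  have hQ : ∀ x, ∑ y, w x y * (f x - f y)^2 ≤ 2 * d * ((4 - 1/m) * lam * M^2) := by
    intro x
    rw [← EigenAux.deg_two_gam w f x (ne_of_gt (hdeg_pos x))]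
    have hg0 : 0 ≤ gam w f f x := EigenAux.gam_nonneg hw_nonneg f x (hdeg_pos x)
    calc deg w x * (2 * gam w f f x)
        ≤ deg w x * (2 * ((4 - 1/m) * lam * M^2)) := by
          apply mul_le_mul_of_nonneg_left _ (hdeg_pos x).le
          linarith [hHar x]
      _ ≤ d * (2 * ((4 - 1/m) * lam * M^2)) := by
          apply mul_le_mul_of_nonneg_right (hdegle x)
          linarith
      _ = 2 * d * ((4 - 1/m) * lam * M^2) := by ring
  -- endpoint bounds
  have hQmax : ∑ y, w xM y * (f xM - f y)^2 ≤ 2 * lam * M^2 * d := by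
    have h := EigenAux.Q_max_bound hw_nonneg f lam M xM (ne_of_gt (hdeg_pos xM))
      hmax habs_lo hMfxM hlampos.le (hlapf xM)
    calc ∑ y, w xM y * (f xM - f y)^2 ≤ 2 * lam * M^2 * deg w xM := h
      _ ≤ 2 * lam * M^2 * d := by
          apply mul_le_mul_of_nonneg_left (hdegle xM)
          nlinarith [sq_nonneg M]
  have hQmin : ∑ y, w xm y * (f xm - f y)^2 ≤ 2 * lam * M^2 * d := by
    have hnegfun : (fun y => -f y) = (fun y => (-1:ℝ) * f y) := funext fun y => by ring
    have hlapneg : lap w (fun y => -f y) xm = -(lam * (-f xm)) := by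
      rw [hnegfun, EigenAux.lap_smul, hlapf xm]; ring
    have h := EigenAux.Q_max_bound hw_nonneg (fun y => -f y) lam M xm
      (ne_of_gt (hdeg_pos xm)) (fun y => by simp only [neg_le_neg_iff]; exact hmin y)
      (fun y => by simpa using habs_hi y) (by simpa using hMfxm) hlampos.le hlapneg
    have e : ∀ y, w xm y * ((-f xm) - (-f y))^2 = w xm y * (f xm - f y)^2 :=
      fun y => by ring
    rw [Finset.sum_congr rfl fun y _ => e y] at h
    calc ∑ y, w xm y * (f xm - f y)^2 ≤ 2 * lam * M^2 * deg w xm := h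
      _ ≤ 2 * lam * M^2 * d := by
          apply mul_le_mul_of_nonneg_left (hdegle xm)
          nlinarith [sq_nonneg M]
  -- path from xM to xm
  have hne : xM ≠ xm := fun h => by rw [h] at hlt; exact lt_irrefl _ hlt
  obtain ⟨p, hp_len⟩ := (hconn xM xm).exists_walk_length_eq_dist
  have hediam : G.ediam ≠ ⊤ := by
    obtain ⟨u, v, huv⟩ := G.exists_edist_eq_ediam_of_finite
    rw [← huv]
    exact (SimpleGraph.edist_ne_top_iff_reachable).mpr (hconn u v)
  set q := p.bypass with hq_def
  have hq_path : q.IsPath := p.bypass_isPath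
  have hLD : q.length ≤ G.diam := by
    calc q.length ≤ p.length := p.length_bypass_le
      _ = G.dist xM xm := hp_len
      _ ≤ G.diam := SimpleGraph.dist_le_diam hediam
  have hL1 : 1 ≤ q.length := by
    rcases Nat.eq_zero_or_pos q.length with h | h
    · exact absurd (SimpleGraph.Walk.eq_of_length_eq_zero h) hne
    · exact h
  obtain ⟨n, hn⟩ : ∃ n, q.length = n + 1 := ⟨q.length - 1, by omega⟩
  set L : ℕ := q.length with hL_def
  set g : ℕ → ℝ := fun i => f (q.getVert i) with hg_def
  set t : ℕ → ℝ := fun i => (g i - g (i+1))^2 with ht_def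
  have hadjq : ∀ i, i < L → G.Adj (q.getVert i) (q.getVert (i+1)) :=
    fun i hi => q.adj_getVert_succ hi
  have hinj := EigenAux.walk_getVert_inj q hq_path
  have htnonneg : ∀ i, 0 ≤ t i := fun i => sq_nonneg _
  -- step bound t 0
  have ht0 : t 0 ≤ 2 * lam * M^2 * d := by
    have hadj0 : G.Adj xM (q.getVert 1) := by
      have := hadjq 0 (by omega)
      rwa [SimpleGraph.Walk.getVert_zero] at this
    have hw1 : w xM (q.getVert 1) = 1 := by simp only [hw_def, if_pos hadj0]
    have hle : w xM (q.getVert 1) * (f xM - f (q.getVert 1))^2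
        ≤ ∑ y, w xM y * (f xM - f y)^2 :=
      Finset.single_le_sum (f := fun y => w xM y * (f xM - f y)^2)
        (fun y _ => mul_nonneg (hw_nonneg xM y) (sq_nonneg _)) (Finset.mem_univ _)
    have e : t 0 = w xM (q.getVert 1) * (f xM - f (q.getVert 1))^2 := by
      simp only [ht_def, hg_def, SimpleGraph.Walk.getVert_zero, hw1, one_mul]
    rw [e]
    exact le_trans hle hQmax
  -- step bound t n
  have htn : t n ≤ 2 * lam * M^2 * d := by
    have hvn : q.getVert (n+1) = xm := by
      rw [← hn]; exact q.getVert_length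
    have hadjn : G.Adj xm (q.getVert n) := by
      have := hadjq n (by omega)
      rw [hvn] at this
      exact this.symm
    have hw1 : w xm (q.getVert n) = 1 := by simp only [hw_def, if_pos hadjn]
    have hle : w xm (q.getVert n) * (f xm - f (q.getVert n))^2
        ≤ ∑ y, w xm y * (f xm - f y)^2 :=
      Finset.single_le_sum (f := fun y => w xm y * (f xm - f y)^2)
        (fun y _ => mul_nonneg (hw_nonneg xm y) (sq_nonneg _)) (Finset.mem_univ _)
    have e : t n = w xm (q.getVert n) * (f xm - f (q.getVert n))^2 := by
      simp only [ht_def, hg_def, hvn, hw1, one_mul]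
      ring
    rw [e]
    exact le_trans hle hQmin
  -- interior pair bounds
  have hpair : ∀ i, i < n → t i + t (i+1) ≤ 2 * d * ((4 - 1/m) * lam * M^2) := by
    intro i hi
    set u := q.getVert (i+1) with hu_def
    set a := q.getVert i with ha_def
    set b := q.getVert (i+2) with hb_def
    have hUA : G.Adj u a := (hadjq i (by omega)).symm
    have hUB : G.Adj u b := hadjq (i+1) (by omega)
    have hab2 : a ≠ b := by
      intro h
      have := hinj i (by omega) (i+2) (by omega) h
      omega
    have hwa : w u a = 1 := by simp only [hw_def, if_pos hUA]
    have hwb : w u b = 1 := by simp only [hw_def, if_pos hUB]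
    have hsum2 : ∑ y ∈ ({a, b} : Finset V), w u y * (f u - f y)^2
        ≤ ∑ y, w u y * (f u - f y)^2 :=
      Finset.sum_le_sum_of_subset_of_nonneg (Finset.subset_univ _)
        (fun y _ _ => mul_nonneg (hw_nonneg u y) (sq_nonneg _))
    rw [Finset.sum_pair hab2, hwa, hwb, one_mul, one_mul] at hsum2
    have e : t i + t (i+1) = (f u - f a)^2 + (f u - f b)^2 := by
      simp only [ht_def, hg_def, ← hu_def, ← ha_def, ← hb_def]
      ring
    rw [e]
    exact le_trans hsum2 (hQ u)
  -- telescoping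
  have htel : ∑ i ∈ Finset.range L, (g i - g (i+1)) = f xM - f xm := by
    rw [Finset.sum_range_sub' g L]
    simp only [hg_def, SimpleGraph.Walk.getVert_zero, hL_def, q.getVert_length]
  have hMdrop : M ≤ f xM - f xm := by
    apply max_le
    · linarith [hfxm0]
    · linarith [hfxM0]
  -- Cauchy–Schwarz
  have hCS : (f xM - f xm)^2 ≤ (L:ℝ) * ∑ i ∈ Finset.range L, t i := by
    have hcs := Finset.sum_mul_sq_le_sq_mul_sq (Finset.range L)
      (fun _ => (1:ℝ)) (fun i => g i - g (i+1))
    simp only [one_mul, one_pow] at hcs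
    rw [htel] at hcs
    calc (f xM - f xm)^2
        ≤ (∑ _i ∈ Finset.range L, (1:ℝ)) * ∑ i ∈ Finset.range L, (g i - g (i+1))^2 := hcs
      _ = (L:ℝ) * ∑ i ∈ Finset.range L, t i := by
          simp only [Finset.sum_const, Finset.card_range, nsmul_eq_mul, mul_one, ht_def]
  -- sum splitting
  have hsplit : 2 * ∑ i ∈ Finset.range L, t i
      = (∑ i ∈ Finset.range n, (t i + t (i+1))) + t 0 + t n := by
    have h1 : ∑ i ∈ Finset.range L, t i = ∑ i ∈ Finset.range n, t i + t n := by
      rw [hn, Finset.sum_range_succ]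
    have h2 : ∑ i ∈ Finset.range L, t i = (∑ i ∈ Finset.range n, t (i+1)) + t 0 := by
      rw [hn, Finset.sum_range_succ']
    rw [Finset.sum_add_distrib]
    linarith
  have hsum_interior : ∑ i ∈ Finset.range n, (t i + t (i+1))
      ≤ (n:ℝ) * (2 * d * ((4 - 1/m) * lam * M^2)) := by
    have h := Finset.sum_le_card_nsmul (Finset.range n) (fun i => t i + t (i+1))
      (2 * d * ((4 - 1/m) * lam * M^2))
      (fun i hi => hpair i (Finset.mem_range.mp hi))
    simpa [Finset.card_range, nsmul_eq_mul] using h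
  have hsum_t : 2 * ∑ i ∈ Finset.range L, t i
      ≤ (n:ℝ) * (2 * d * ((4 - 1/m) * lam * M^2)) + 2 * (2 * lam * M^2 * d) := by
    rw [hsplit]; linarith
  -- final assembly
  have hK2 : (2:ℝ) ≤ 4 - 1/m := by linarith
  have hLcast : (L:ℝ) = (n:ℝ) + 1 := by rw [hn]; push_cast; ring
  have hDL : (L:ℝ) ≤ (G.diam : ℝ) := Nat.cast_le.mpr hLD
  have hD1 : (1:ℝ) ≤ (G.diam : ℝ) := by
    have : 1 ≤ G.diam := le_trans hL1 hLD
    exact_mod_cast this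
  have hM2pos : 0 < M^2 := by positivity
  have hfinal : M^2 ≤ ((4 - 1/m) * d * (G.diam : ℝ)^2 * lam) * M^2 := by
    have hstep1 : M^2 ≤ (f xM - f xm)^2 := by nlinarith
    have hstep2 : (f xM - f xm)^2 ≤ (L:ℝ) * ∑ i ∈ Finset.range L, t i := hCS
    have hstep3 : (L:ℝ) * (2 * ∑ i ∈ Finset.range L, t i)
        ≤ (L:ℝ) * ((n:ℝ) * (2 * d * ((4 - 1/m) * lam * M^2)) + 2 * (2 * lam * M^2 * d)) := by
      apply mul_le_mul_of_nonneg_left hsum_t (Nat.cast_nonneg L)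
    have hc : (0:ℝ) ≤ d * lam * M^2 := by positivity
    -- (n+1)*(n*(4-1/m) + 2) ≤ (4-1/m)*(n+1)^2 ≤ (4-1/m)*D^2
    have hn0 : (0:ℝ) ≤ (n:ℝ) := Nat.cast_nonneg n
    have hpoly : (L:ℝ) * ((n:ℝ) * (4 - 1/m) + 2) ≤ (4 - 1/m) * (G.diam : ℝ)^2 := by
      have e1 : (L:ℝ) * ((n:ℝ) * (4 - 1/m) + 2) ≤ (L:ℝ) * (((n:ℝ) + 1) * (4 - 1/m)) := by
        apply mul_le_mul_of_nonneg_left _ (by linarith : (0:ℝ) ≤ (L:ℝ))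
        nlinarith
      have e2 : (L:ℝ) * (((n:ℝ) + 1) * (4 - 1/m)) = (4 - 1/m) * (L:ℝ)^2 := by
        rw [hLcast]; ring
      have e3 : (4 - 1/m) * (L:ℝ)^2 ≤ (4 - 1/m) * (G.diam : ℝ)^2 := by
        apply mul_le_mul_of_nonneg_left _ (by linarith)
        nlinarith [hDL, hLcast, hn0]
      linarith
    -- combine: M^2 ≤ L * Σt; 2*(L*Σt) ≤ L*(2Σt) ≤ L*(bound) = 2*(d λ M²)*(L*(nK+2))
    have hcomb : 2 * M^2 ≤ 2 * ((d * lam * M^2) * ((L:ℝ) * ((n:ℝ) * (4 - 1/m) + 2))) := by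
      have h5 : (L:ℝ) * ((n:ℝ) * (2 * d * ((4 - 1/m) * lam * M^2)) + 2 * (2 * lam * M^2 * d))
          = 2 * ((d * lam * M^2) * ((L:ℝ) * ((n:ℝ) * (4 - 1/m) + 2))) := by ring
      nlinarith [hstep1, hstep2, hstep3]
    have hmono : (d * lam * M^2) * ((L:ℝ) * ((n:ℝ) * (4 - 1/m) + 2))
        ≤ (d * lam * M^2) * ((4 - 1/m) * (G.diam : ℝ)^2) := by
      exact mul_le_mul_of_nonneg_left hpoly hc
    calc M^2 ≤ (d * lam * M^2) * ((L:ℝ) * ((n:ℝ) * (4 - 1/m) + 2)) := by linarith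
      _ ≤ (d * lam * M^2) * ((4 - 1/m) * (G.diam : ℝ)^2) := hmono
      _ = ((4 - 1/m) * d * (G.diam : ℝ)^2 * lam) * M^2 := by ring
  have hone : (1:ℝ) ≤ (4 - 1/m) * d * (G.diam : ℝ)^2 * lam := by nlinarith
  have hpos : (0:ℝ) < (4 - 1/m) * d * (G.diam : ℝ)^2 := by
    have h1 : (0:ℝ) < 4 - 1/m := by linarith
    have h2 : (0:ℝ) < (G.diam : ℝ)^2 := by nlinarith
    positivity
  rw [ge_iff_le, div_le_iff₀ hpos]
  calc (1:ℝ) ≤ (4 - 1/m) * d * (G.diam : ℝ)^2 * lam := hone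
    _ = lam * ((4 - 1/m) * d * (G.diam : ℝ)^2) := by ring
end
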